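/- Let h : ℝ^m → ℝ be convex, let F : ℝ^d → ℝ^m be differentiable, let r : ℝ^d → ℝ be ρ-weakly convex, and suppose there exists β > 0 such that |h(F(y)) − h(F(x) + ∇F(x)(y − x))| ≤ (β/2)‖y − x‖² for all x, y ∈ ℝ^d. Then the composite function f(x) = h(F(x)) + r(x) is (β + ρ)-weakly convex, i.e., x ↦ f(x) + ((β + ρ)/2)‖x‖² is convex. -/

import Mathlib

open Set Filter Topology

/-- If `h` is convex, `F` is differentiable, `r` is `ρ`-weakly convex, and the
composition satisfies the quadratic approximation bound
`|h(F(y)) − h(F(x) + ∇F(x)(y − x))| ≤ (β/2)‖y − x‖²`, then the composite function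
`f = h ∘ F + r` is `(β + ρ)`-weakly convex. -/
theorem composite_weakly_convex {d m : ℕ}
    (h : EuclideanSpace ℝ (Fin m) → ℝ) (hconv : ConvexOn ℝ Set.univ h)
    (F : EuclideanSpace ℝ (Fin d) → EuclideanSpace ℝ (Fin m))
    (F' : EuclideanSpace ℝ (Fin d) → (EuclideanSpace ℝ (Fin d) →L[ℝ] EuclideanSpace ℝ (Fin m)))
    (hF : ∀ x, HasFDerivAt F (F' x) x)
    (r : EuclideanSpace ℝ (Fin d) → ℝ) (ρ : ℝ) (hρ : 0 < ρ)
    (hwc : ConvexOn ℝ Set.univ (fun z => r z + ρ / 2 * ‖z‖ ^ 2))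
    (β : ℝ) (hβ : 0 < β)
    (happrox : ∀ x y, |h (F y) - h (F x + F' x (y - x))| ≤ β / 2 * ‖y - x‖ ^ 2) :
    ConvexOn ℝ Set.univ (fun x => (h (F x) + r x) + (β + ρ) / 2 * ‖x‖ ^ 2) := by
  have key : ConvexOn ℝ Set.univ (fun x => h (F x) + β / 2 * ‖x‖ ^ 2) := by
    refine ⟨convex_univ, ?_⟩
    rintro x - y - a b ha hb hab
    set z := a • x + b • y with hz
    have hx1 : h (F z + F' z (x - z)) ≤ h (F x) + β / 2 * ‖x - z‖ ^ 2 := by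
      have := abs_le.mp (happrox z x); linarith [this.1]
    have hy1 : h (F z + F' z (y - z)) ≤ h (F y) + β / 2 * ‖y - z‖ ^ 2 := by
      have := abs_le.mp (happrox z y); linarith [this.1]
    have heq : a • (F z + F' z (x - z)) + b • (F z + F' z (y - z)) = F z := by
      have h0 : a • (x - z) + b • (y - z) = 0 := by
        rw [hz, show a = 1 - b by linarith]; module
      have : F' z (a • (x - z) + b • (y - z)) = 0 := by rw [h0]; simp
      simp only [map_add, map_smul] at this
      rw [smul_add, smul_add]
      have hsum : a • F z + b • F z = F z := by
        rw [← add_smul, hab, one_smul]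
      rw [show a • F z + a • F' z (x - z) + (b • F z + b • F' z (y - z))
        = (a • F z + b • F z) + (a • F' z (x - z) + b • F' z (y - z)) by abel,
        hsum]
      rw [show a • F' z (x - z) + b • F' z (y - z) = 0 from by
        simpa [map_smul] using this]
      simp
    have hcomb : h (F z) ≤ a * h (F z + F' z (x - z)) + b * h (F z + F' z (y - z)) := by
      have := hconv.2 (mem_univ (F z + F' z (x - z))) (mem_univ (F z + F' z (y - z))) ha hb hab
      rwa [heq] at this
    have hxz : x - z = b • (x - y) := by rw [hz, show a = 1 - b by linarith]; module
    have hyz : y - z = a • (y - x) := by rw [hz, show b = 1 - a by linarith]; module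
    have hnxz : ‖x - z‖ ^ 2 = b ^ 2 * ‖x - y‖ ^ 2 := by
      rw [hxz, norm_smul, Real.norm_eq_abs, mul_pow, sq_abs]
    have hnyz : ‖y - z‖ ^ 2 = a ^ 2 * ‖x - y‖ ^ 2 := by
      rw [hyz, norm_smul, Real.norm_eq_abs, mul_pow, sq_abs, ← neg_sub x y, norm_neg]
    have hnorm : ‖z‖ ^ 2 = a * ‖x‖ ^ 2 + b * ‖y‖ ^ 2 - a * b * ‖x - y‖ ^ 2 := by
      have e1 : ‖(a • x : EuclideanSpace ℝ (Fin d)) + b • y‖ ^ 2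
          = ‖a • x‖ ^ 2 + 2 * inner ℝ (a • x) (b • y) + ‖b • y‖ ^ 2 :=
        norm_add_sq_real _ _
      have e2 : ‖x - y‖ ^ 2 = ‖x‖ ^ 2 - 2 * inner ℝ x y + ‖y‖ ^ 2 := norm_sub_sq_real x y
      have e3 : (inner ℝ (a • x) (b • y) : ℝ) = a * b * inner ℝ x y := by
        rw [real_inner_smul_left, real_inner_smul_right]; ring
      have e4 : ‖a • x‖ = a * ‖x‖ := by rw [norm_smul, Real.norm_eq_abs, abs_of_nonneg ha]
      have e5 : ‖b • y‖ = b * ‖y‖ := by rw [norm_smul, Real.norm_eq_abs, abs_of_nonneg hb]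
      rw [hz, e1, e3, e4, e5, e2]
      have : b = 1 - a := by linarith
      rw [this]; ring
    simp only
    calc h (F z) + β / 2 * ‖z‖ ^ 2
        ≤ a * (h (F x) + β / 2 * ‖x - z‖ ^ 2) + b * (h (F y) + β / 2 * ‖y - z‖ ^ 2)
          + β / 2 * ‖z‖ ^ 2 := by
          nlinarith [mul_le_mul_of_nonneg_left hx1 ha, mul_le_mul_of_nonneg_left hy1 hb]
      _ = a * (h (F x) + β / 2 * ‖x‖ ^ 2) + b * (h (F y) + β / 2 * ‖y‖ ^ 2) := by
          rw [hnxz, hnyz, hnorm]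
          have : b = 1 - a := by linarith
          rw [this]; ring
  have := key.add hwc
  have heqf : (fun x => (h (F x) + r x) + (β + ρ) / 2 * ‖x‖ ^ 2)
      = fun x => (h (F x) + β / 2 * ‖x‖ ^ 2) + (r x + ρ / 2 * ‖x‖ ^ 2) := by
    funext x; ring
  rw [heqf]
  exact this
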